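/- The map φ : bv* → l_∞ defined by φ(f) = (f(b^{(k)}))_{k≥1} is an isometric linear isomorphism; that is, φ is linear, bijective, and satisfies ‖φ(f)‖_∞ = ‖f‖ for every continuous linear functional f on bv. In particular, the continuous dual of bv is isometrically isomorphic to l_∞. -/

import Mathlib

noncomputable section

open Filter Topology
open scoped ENNReal

/-- The difference operator: sequences indexed from `0`, representing `(x_k)_{k ≥ 1}`
(so index `n : ℕ` stands for `x_{n+1}`), with the convention `x_0 = 0`. -/
def delta (x : ℕ → ℂ) : ℕ → ℂ := fun n => x n - if n = 0 then 0 else x (n - 1)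

/-- The difference operator as a linear equivalence of the space of all sequences,
with inverse given by partial sums. -/
def deltaL : (ℕ → ℂ) ≃ₗ[ℂ] (ℕ → ℂ) where
  toFun := delta
  invFun y := fun n => ∑ i ∈ Finset.range (n + 1), y i
  map_add' x y := by
    funext n
    simp only [delta, Pi.add_apply]
    split <;> ring
  map_smul' c x := by
    funext n
    simp only [delta, Pi.smul_apply, smul_eq_mul, RingHom.id_apply]
    split <;> ring
  left_inv x := by
    funext n
    induction n with
    | zero => simp [delta]
    | succ k ih =>
      show (∑ i ∈ Finset.range (k + 1 + 1), delta x i) = x (k + 1)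
      rw [Finset.sum_range_succ]
      have ih' : (∑ i ∈ Finset.range (k + 1), delta x i) = x k := ih
      rw [ih']
      simp [delta]
  right_inv y := by
    funext n
    show delta (fun n => ∑ i ∈ Finset.range (n + 1), y i) n = y n
    cases n with
    | zero => simp [delta]
    | succ k => simp [delta, Finset.sum_range_succ]

/-- The space `bv_p`, as a submodule of the space of all complex sequences:
`x ∈ bv_p` iff `Δx ∈ ℓ^p`. -/
def bvSubmodule (p : ℝ≥0∞) : Submodule ℂ (ℕ → ℂ) where
  carrier := {x | Memℓp (delta x) p}
  add_mem' {x y} hx hy := by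
    have : delta (x + y) = delta x + delta y := map_add deltaL x y
    simpa [Set.mem_setOf_eq, this] using hx.add hy
  zero_mem' := by
    have : delta (0 : ℕ → ℂ) = 0 := map_zero deltaL
    simp [Set.mem_setOf_eq, this]
    exact zero_memℓp
  smul_mem' c x hx := by
    have : delta (c • x) = c • delta x := map_smul deltaL c x
    simpa [Set.mem_setOf_eq, this] using hx.const_smul c

/-- The space `bv_p` as a type.  (A `def`, not an `abbrev`, so that it does not pick up
the product topology of the ambient sequence space.) -/
def bv (p : ℝ≥0∞) : Type := ↥(bvSubmodule p)

namespace bv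

instance (p : ℝ≥0∞) : AddCommGroup (bv p) :=
  inferInstanceAs (AddCommGroup ↥(bvSubmodule p))

instance (p : ℝ≥0∞) : Module ℂ (bv p) :=
  inferInstanceAs (Module ℂ ↥(bvSubmodule p))

/-- The underlying sequence of an element of `bv_p`. -/
def seq {p : ℝ≥0∞} (x : bv p) : ℕ → ℂ := Subtype.val (x : ↥(bvSubmodule p))

lemma memℓp_delta {p : ℝ≥0∞} (x : bv p) : Memℓp (delta (seq x)) p :=
  (x : ↥(bvSubmodule p)).2

/-- The difference operator, as a linear map from `bv_p` to `ℓ^p`. -/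
def toLp (p : ℝ≥0∞) : bv p →ₗ[ℂ] lp (fun _ : ℕ => ℂ) p where
  toFun x := ⟨delta (seq x), memℓp_delta x⟩
  map_add' x y := by
    ext n
    have : delta (seq x + seq y) = delta (seq x) + delta (seq y) := map_add deltaL _ _
    change delta (seq (x + y)) n = _
    have hseq : seq (x + y) = seq x + seq y := rfl
    rw [hseq, this]
    rfl
  map_smul' c x := by
    ext n
    have : delta (c • seq x) = c • delta (seq x) := map_smul deltaL c _
    change delta (seq (c • x)) n = _
    have hseq : seq (c • x) = c • seq x := rfl
    rw [hseq, this]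
    rfl

lemma toLp_injective (p : ℝ≥0∞) : Function.Injective (toLp p) := by
  intro x y h
  have h' : delta (seq x) = delta (seq y) := by
    have := congrArg (Subtype.val) h
    exact this
  have : seq x = seq y := deltaL.injective h'
  exact Subtype.ext this

noncomputable instance (p : ℝ≥0∞) [Fact (1 ≤ p)] : NormedAddCommGroup (bv p) :=
  NormedAddCommGroup.induced (bv p) (lp (fun _ : ℕ => ℂ) p) (toLp p) (toLp_injective p)

noncomputable instance (p : ℝ≥0∞) [Fact (1 ≤ p)] : NormedSpace ℂ (bv p) :=
  NormedSpace.induced ℂ (bv p) (lp (fun _ : ℕ => ℂ) p) (toLp p)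

end bv

/-- The sequence `b^{(k+1)}`: `1` from position `k` on (positions indexed from `0`). -/
def bSeq (k : ℕ) : ℕ → ℂ := fun n => if k ≤ n then 1 else 0

/-- The sequence `e^{(k+1)}`: `1` exactly at position `k`. -/
def eSeq (k : ℕ) : ℕ → ℂ := fun n => if n = k then 1 else 0

lemma memℓp_eSeq (p : ℝ≥0∞) [Fact (1 ≤ p)] (k : ℕ) : Memℓp (eSeq k) p := by
  rcases eq_or_ne p ∞ with rfl | hp
  · apply memℓp_infty
    apply Set.Finite.bddAbove
    apply Set.Finite.subset (Set.finite_singleton (0:ℝ) |>.insert 1)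
    rintro r ⟨n, rfl⟩
    simp only [eSeq]
    split <;> simp
  · apply memℓp_gen
    apply summable_of_ne_finset_zero (s := {k})
    intro n hn
    simp only [Finset.mem_singleton] at hn
    simp only [eSeq, if_neg hn, norm_zero]
    have hp0 : 0 < p.toReal := by
      have h1 : (1 : ℝ≥0∞) ≤ p := Fact.out
      exact ENNReal.toReal_pos (by intro h; rw [h] at h1; simp at h1) hp
    exact Real.zero_rpow hp0.ne'

lemma delta_bSeq (k : ℕ) : delta (bSeq k) = eSeq k := by
  funext n
  rcases n with _ | m <;>
    simp only [delta, bSeq, eSeq, Nat.add_sub_cancel, Nat.succ_ne_zero, if_false, reduceIte,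
      sub_zero] <;>
    split_ifs <;> first | omega | (exfalso; omega) | (norm_num; done) | tauto

lemma delta_eSeq (k : ℕ) : delta (eSeq k) = eSeq k - eSeq (k + 1) := by
  funext n
  rcases n with _ | m <;>
    simp only [delta, eSeq, Pi.sub_apply, Nat.add_sub_cancel, Nat.succ_ne_zero, if_false,
      reduceIte, sub_zero] <;>
    split_ifs <;> first | omega | (exfalso; omega) | (norm_num; done) | tauto

/-- The element `b^{(k+1)}` of `bv_p`. -/
def bvB (p : ℝ≥0∞) [Fact (1 ≤ p)] (k : ℕ) : bv p :=
  ⟨bSeq k, show Memℓp (delta (bSeq k)) p by rw [delta_bSeq]; exact memℓp_eSeq p k⟩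

/-- The element `e^{(k+1)}` of `bv_p`. -/
def bvE (p : ℝ≥0∞) [Fact (1 ≤ p)] (k : ℕ) : bv p :=
  ⟨eSeq k, show Memℓp (delta (eSeq k)) p by
    rw [delta_eSeq]; exact (memℓp_eSeq p k).sub (memℓp_eSeq p (k + 1))⟩

namespace BvDualAux

open bv

lemma summable_bv (x : bv 1) : Summable (fun k => ‖delta (seq x) k‖) := by
  have h := (memℓp_delta x).summable (p := 1) (by norm_num)
  simpa using h

lemma norm_bv (x : bv 1) : ‖x‖ = ∑' k, ‖delta (seq x) k‖ := by
  have h : ‖x‖ = ‖toLp 1 x‖ := rfl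
  rw [h, lp.norm_eq_tsum_rpow (by norm_num)]
  simp only [ENNReal.toReal_one, Real.rpow_one, one_div_one]
  rfl

/-- `bv 1` is isometrically isomorphic to `ℓ¹` via `toLp`. -/
noncomputable def bvEquiv : bv 1 ≃ₗᵢ[ℂ] lp (fun _ : ℕ => ℂ) 1 where
  toLinearEquiv := LinearEquiv.ofBijective (toLp 1) ⟨toLp_injective 1, by
    intro y
    refine ⟨⟨deltaL.symm y.1, ?_⟩, ?_⟩
    · show Memℓp (delta (deltaL.symm y.1)) 1
      have : delta (deltaL.symm y.1) = deltaL (deltaL.symm y.1) := rfl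
      rw [this]
      have hy : Memℓp (y.1 : ℕ → ℂ) 1 := y.2
      have h2 : deltaL (deltaL.symm (y.1 : ℕ → ℂ)) = (y.1 : ℕ → ℂ) := deltaL.apply_symm_apply _
      exact cast (congrArg (fun z : ℕ → ℂ => Memℓp z 1) h2.symm) hy
    · apply Subtype.ext
      show delta (deltaL.symm y.1) = y.1
      have : delta (deltaL.symm y.1) = deltaL (deltaL.symm y.1) := rfl
      rw [this]
      exact deltaL.apply_symm_apply _⟩
  norm_map' x := rfl

lemma bvEquiv_apply_coe (x : bv 1) (k : ℕ) : (bvEquiv x : ∀ _ : ℕ, ℂ) k = delta (seq x) k := rfl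

lemma bvEquiv_bvB (k : ℕ) : bvEquiv (bvB 1 k) = lp.single 1 k 1 := by
  apply Subtype.ext
  funext n
  show delta (seq (bvB 1 k)) n = _
  have : seq (bvB 1 k) = bSeq k := rfl
  rw [this, delta_bSeq]
  by_cases h : n = k
  · subst h; rw [lp.single_apply_self]; simp [eSeq]
  · rw [lp.single_apply_ne _ _ _ h]; simp [eSeq, h]

lemma norm_bvB (k : ℕ) : ‖bvB 1 k‖ = 1 := by
  have h : ‖bvB 1 k‖ = ‖bvEquiv (bvB 1 k)‖ := (bvEquiv.norm_map _).symm
  rw [h, bvEquiv_bvB]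
  have := lp.norm_single (p := 1) (E := fun _ : ℕ => ℂ) (by norm_num)
    k (1 : ℂ)
  simpa using this

lemma hasSum_repr (x : bv 1) : HasSum (fun k => delta (seq x) k • bvB 1 k) x := by
  have h1 : HasSum (fun k => lp.single 1 k ((bvEquiv x : ∀ _ : ℕ, ℂ) k)) (bvEquiv x) :=
    lp.hasSum_single (by simp) (bvEquiv x)
  have h2 := (bvEquiv.symm.toContinuousLinearEquiv.toContinuousLinearMap).hasSum h1
  have h3 : ∀ k, bvEquiv.symm (lp.single 1 k ((bvEquiv x : ∀ _ : ℕ, ℂ) k))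
      = delta (seq x) k • bvB 1 k := by
    intro k
    apply bvEquiv.injective
    rw [bvEquiv.apply_symm_apply, map_smul, bvEquiv_bvB, ← lp.single_smul,
      bvEquiv_apply_coe, smul_eq_mul, mul_one]
  have h4 : bvEquiv.symm (bvEquiv x) = x := bvEquiv.symm_apply_apply x
  simpa only [LinearIsometryEquiv.coe_toContinuousLinearEquiv,
    ContinuousLinearEquiv.coe_coe, h3, h4] using h2

lemma key_repr (f : bv 1 →L[ℂ] ℂ) (x : bv 1) :
    HasSum (fun k => delta (seq x) k * f (bvB 1 k)) (f x) := by
  have := f.hasSum (hasSum_repr x)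
  simpa only [map_smul, smul_eq_mul] using this

lemma summable_mul_norm (x : bv 1) (g : ℕ → ℂ) (C : ℝ) (hC : ∀ k, ‖g k‖ ≤ C) :
    Summable (fun k => ‖delta (seq x) k * g k‖) := by
  refine Summable.of_nonneg_of_le (fun k => norm_nonneg _)
    (fun k => ?_) ((summable_bv x).mul_right C)
  rw [norm_mul]
  exact mul_le_mul_of_nonneg_left (hC k) (norm_nonneg _)

lemma summable_mul (x : bv 1) (g : ℕ → ℂ) (C : ℝ) (hC : ∀ k, ‖g k‖ ≤ C) :
    Summable (fun k => delta (seq x) k * g k) :=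
  Summable.of_norm (summable_mul_norm x g C hC)

/-- The map `φ` as a bare function. -/
noncomputable def phiFun (f : bv 1 →L[ℂ] ℂ) : lp (fun _ : ℕ => ℂ) ∞ :=
  ⟨fun k => f (bvB 1 k), memℓp_infty ⟨‖f‖, by
    rintro r ⟨k, rfl⟩
    simpa [norm_bvB] using f.le_opNorm (bvB 1 k)⟩⟩

lemma phiFun_apply (f : bv 1 →L[ℂ] ℂ) (k : ℕ) :
    (phiFun f : ∀ _ : ℕ, ℂ) k = f (bvB 1 k) := rfl

lemma norm_phiFun (f : bv 1 →L[ℂ] ℂ) : ‖phiFun f‖ = ‖f‖ := by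
  apply le_antisymm
  · rw [lp.norm_eq_ciSup]
    apply ciSup_le
    intro k
    rw [phiFun_apply]
    simpa [norm_bvB] using f.le_opNorm (bvB 1 k)
  · apply f.opNorm_le_bound (lp.norm_nonneg' _)
    intro x
    have hkey := (key_repr f x).tsum_eq
    have hb : ∀ k, ‖f (bvB 1 k)‖ ≤ ‖phiFun f‖ := fun k => by
      rw [← phiFun_apply f k]
      exact lp.norm_apply_le_norm ENNReal.top_ne_zero (phiFun f) k
    calc ‖f x‖ = ‖∑' k, delta (seq x) k * f (bvB 1 k)‖ := by rw [hkey]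
      _ ≤ ∑' k, ‖delta (seq x) k * f (bvB 1 k)‖ :=
          norm_tsum_le_tsum_norm (summable_mul_norm x (fun k => f (bvB 1 k)) ‖phiFun f‖ hb)
      _ ≤ ∑' k, ‖delta (seq x) k‖ * ‖phiFun f‖ := by
          refine Summable.tsum_le_tsum (fun k => ?_)
            (summable_mul_norm x (fun k => f (bvB 1 k)) ‖phiFun f‖ hb)
            ((summable_bv x).mul_right _)
          rw [norm_mul]
          exact mul_le_mul_of_nonneg_left (hb k) (norm_nonneg _)
      _ = (∑' k, ‖delta (seq x) k‖) * ‖phiFun f‖ := tsum_mul_right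
      _ = ‖phiFun f‖ * ‖x‖ := by rw [norm_bv x]; ring

/-- The inverse map: a bounded sequence gives a functional on `bv 1`. -/
noncomputable def invFunL (y : lp (fun _ : ℕ => ℂ) ∞) : bv 1 →L[ℂ] ℂ :=
  LinearMap.mkContinuous
    { toFun := fun x => ∑' k, delta (seq x) k * (y : ∀ _ : ℕ, ℂ) k
      map_add' := by
        intro x x'
        have hs : ∀ z : bv 1, Summable (fun k => delta (seq z) k * (y : ∀ _ : ℕ, ℂ) k) :=
          fun z => summable_mul z _ ‖y‖
            (fun k => lp.norm_apply_le_norm ENNReal.top_ne_zero y k)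
        have hd : delta (seq (x + x')) = delta (seq x) + delta (seq x') :=
          map_add deltaL (seq x) (seq x')
        rw [← Summable.tsum_add (hs x) (hs x')]
        apply tsum_congr
        intro k
        rw [hd]
        simp [add_mul]
      map_smul' := by
        intro c x
        have hs : Summable (fun k => delta (seq x) k * (y : ∀ _ : ℕ, ℂ) k) :=
          summable_mul x _ ‖y‖ (fun k => lp.norm_apply_le_norm ENNReal.top_ne_zero y k)
        have hd : delta (seq (c • x)) = c • delta (seq x) := map_smul deltaL c (seq x)
        rw [RingHom.id_apply, ← tsum_const_smul'' c]
        apply tsum_congr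
        intro k
        rw [hd]
        simp [mul_assoc] }
    ‖y‖
    (by
      intro x
      have hb : ∀ k, ‖(y : ∀ _ : ℕ, ℂ) k‖ ≤ ‖y‖ :=
        fun k => lp.norm_apply_le_norm ENNReal.top_ne_zero y k
      have hs := summable_mul_norm x (fun k => (y : ∀ _ : ℕ, ℂ) k) ‖y‖ hb
      calc ‖∑' k, delta (seq x) k * (y : ∀ _ : ℕ, ℂ) k‖
          ≤ ∑' k, ‖delta (seq x) k * (y : ∀ _ : ℕ, ℂ) k‖ := norm_tsum_le_tsum_norm hs
        _ ≤ ∑' k, ‖delta (seq x) k‖ * ‖y‖ := by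
            refine Summable.tsum_le_tsum (fun k => ?_) hs ((summable_bv x).mul_right _)
            rw [norm_mul]
            exact mul_le_mul_of_nonneg_left (hb k) (norm_nonneg _)
        _ = (∑' k, ‖delta (seq x) k‖) * ‖y‖ := tsum_mul_right
        _ = ‖y‖ * ‖x‖ := by rw [norm_bv x]; ring)

lemma phiFun_surjective : Function.Surjective phiFun := by
  intro y
  refine ⟨invFunL y, ?_⟩
  apply Subtype.ext
  funext k
  show (invFunL y) (bvB 1 k) = (y : ∀ _ : ℕ, ℂ) k
  show (∑' n, delta (seq (bvB 1 k)) n * (y : ∀ _ : ℕ, ℂ) n) = _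
  have hseq : seq (bvB 1 k) = bSeq k := rfl
  rw [hseq, delta_bSeq]
  rw [tsum_eq_single k (fun n hn => by simp [eSeq, hn])]
  simp [eSeq]

/-- The map `φ` as a linear isometry. -/
noncomputable def phiLi : (bv 1 →L[ℂ] ℂ) →ₗᵢ[ℂ] lp (fun _ : ℕ => ℂ) ∞ where
  toFun := phiFun
  map_add' f g := by
    apply Subtype.ext
    funext k
    show (f + g) (bvB 1 k) = f (bvB 1 k) + g (bvB 1 k)
    rfl
  map_smul' c f := by
    apply Subtype.ext
    funext k
    show (c • f) (bvB 1 k) = c * f (bvB 1 k)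
    rfl
  norm_map' := norm_phiFun

end BvDualAux

/-- The map `φ : bv* → l_∞`, `φ(f) = (f(b^{(k)}))_{k≥1}`, is an isometric
linear isomorphism; in particular `bv*` is isometrically isomorphic to `l_∞`. -/
theorem bv_dual_isometric_linfty :
    ∃ φ : (bv 1 →L[ℂ] ℂ) ≃ₗᵢ[ℂ] lp (fun _ : ℕ => ℂ) ∞,
      ∀ (f : bv 1 →L[ℂ] ℂ) (k : ℕ), (φ f : ∀ _ : ℕ, ℂ) k = f (bvB 1 k) := by
  refine ⟨LinearIsometryEquiv.ofSurjective BvDualAux.phiLi BvDualAux.phiFun_surjective,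
    fun f k => ?_⟩
  rfl
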